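/- arXiv:2603.10392 — 2 statements merged into one kernel-verified Lean document; each statement's English description precedes it below -/
import Mathlib

section
/- Let h : ℝⁿ → ℝ, let K : ℝ → ℝ be Lipschitz with K(0) = 0, let a : ℝⁿ → ℝ be Lipschitz with constant c_a, let b : ℝⁿ → ℝᵐ be Lipschitz with constant c_b, and suppose κ := K ∘ h : ℝⁿ → ℝ is Lipschitz with constant c_κ. Let x : ℝ → ℝⁿ be Lipschitz with constant L_x, let u ∈ ℝᵐ with ‖u‖ ≤ B_u, fix t_k ∈ ℝ and ΔT > 0, and set η := ΔT · L_x · (c_a + c_b·B_u + c_κ). Assume that for every t ∈ [t_k, t_k + ΔT] the function t ↦ h(x(t)) is differentiable at t with derivative a(x(t)) + ⟨b(x(t)), u⟩, that h(x(t_k)) ≥ 0, and that a(x(t_k)) + ⟨b(x(t_k)), u⟩ + K(h(x(t_k))) ≥ η. Then h(x(t)) ≥ 0 for all t ∈ [t_k, t_k + ΔT]. -/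
open scoped RealInnerProductSpace NNReal

/-- Robust CBF lemma (Lemma 1 of the paper): under a zero-order-hold control
`u` with `‖u‖ ≤ B_u`, if the trajectory is safe at the sampling instant `t_k`
and the robust CBF condition with discretization margin
`η = ΔT · L_x · (c_a + c_b·B_u + c_κ)` holds at `t_k`, then the trajectory
stays in the safe set `{x : h x ≥ 0}` on all of `[t_k, t_k + ΔT]`. -/
theorem stmt3 {n m : ℕ}
    (h : EuclideanSpace ℝ (Fin n) → ℝ)
    (K : ℝ → ℝ) (cK : ℝ≥0) (hK : LipschitzWith cK K) (hK0 : K 0 = 0)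
    (a : EuclideanSpace ℝ (Fin n) → ℝ)
    (b : EuclideanSpace ℝ (Fin n) → EuclideanSpace ℝ (Fin m))
    (c_a c_b c_κ L_x B_u : ℝ)
    (ha : ∀ p q, |a p - a q| ≤ c_a * ‖p - q‖)
    (hb : ∀ p q, ‖b p - b q‖ ≤ c_b * ‖p - q‖)
    (hκ : ∀ p q, |K (h p) - K (h q)| ≤ c_κ * ‖p - q‖)
    (x : ℝ → EuclideanSpace ℝ (Fin n))
    (hx : ∀ s t : ℝ, ‖x s - x t‖ ≤ L_x * |s - t|)
    (u : EuclideanSpace ℝ (Fin m)) (hu : ‖u‖ ≤ B_u)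
    (t_k ΔT : ℝ) (hΔT : 0 < ΔT)
    (hderiv : ∀ t ∈ Set.Icc t_k (t_k + ΔT),
      HasDerivAt (fun s => h (x s)) (a (x t) + ⟪b (x t), u⟫) t)
    (hsafe0 : 0 ≤ h (x t_k))
    (hrobust : a (x t_k) + ⟪b (x t_k), u⟫ + K (h (x t_k)) ≥
      ΔT * L_x * (c_a + c_b * B_u + c_κ)) :
    ∀ t ∈ Set.Icc t_k (t_k + ΔT), 0 ≤ h (x t) := by
  -- trivial case: n = 0, the space is a subsingleton, so x is constant
  rcases Nat.eq_zero_or_pos n with hn | hn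
  · subst hn
    intro t _
    have : x t = x t_k := Subsingleton.elim _ _
    rw [this]; exact hsafe0
  -- nonneg constants
  obtain ⟨i⟩ : Nonempty (Fin n) := ⟨⟨0, hn⟩⟩
  set p : EuclideanSpace ℝ (Fin n) := EuclideanSpace.single i (1:ℝ) with hp
  have hpn : ‖p - 0‖ = 1 := by
    rw [sub_zero, hp, EuclideanSpace.norm_single]; norm_num
  have hca : 0 ≤ c_a := by
    have := (abs_nonneg _).trans (ha p 0); rwa [hpn, mul_one] at this
  have hcb : 0 ≤ c_b := by
    have := (norm_nonneg _).trans (hb p 0); rwa [hpn, mul_one] at this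
  have hcκ : 0 ≤ c_κ := by
    have := (abs_nonneg _).trans (hκ p 0); rwa [hpn, mul_one] at this
  have hLx : 0 ≤ L_x := by
    have := (norm_nonneg _).trans (hx (t_k + 1) t_k)
    simpa using this
  have hBu : 0 ≤ B_u := le_trans (norm_nonneg u) hu
  set φ : ℝ → ℝ := fun s => h (x s) with hφ
  set T := t_k + ΔT with hT
  -- Lipschitz bound for K
  have hKabs : ∀ y : ℝ, K y ≤ (cK : ℝ) * |y| := by
    intro y
    have := hK.dist_le_mul y 0
    rw [Real.dist_eq, Real.dist_eq, hK0, sub_zero, sub_zero] at this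
    exact (le_abs_self _).trans this
  -- key derivative lower bound
  have key : ∀ t ∈ Set.Icc t_k T, -K (φ t) ≤ a (x t) + ⟪b (x t), u⟫ := by
    intro t ht
    have hdist : ‖x t - x t_k‖ ≤ L_x * ΔT := by
      refine (hx t t_k).trans ?_
      have h1 : |t - t_k| ≤ ΔT := by
        rw [abs_of_nonneg (by linarith [ht.1])]
        linarith [ht.2]
      exact mul_le_mul_of_nonneg_left h1 hLx
    have h1 : |a (x t) - a (x t_k)| ≤ c_a * (L_x * ΔT) :=
      (ha _ _).trans (mul_le_mul_of_nonneg_left hdist hca)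
    have h2 : |⟪b (x t) - b (x t_k), u⟫| ≤ c_b * (L_x * ΔT) * B_u := by
      refine (abs_real_inner_le_norm _ _).trans ?_
      have hbb : ‖b (x t) - b (x t_k)‖ ≤ c_b * (L_x * ΔT) :=
        (hb _ _).trans (mul_le_mul_of_nonneg_left hdist hcb)
      exact mul_le_mul hbb hu (norm_nonneg _) (by positivity)
    have h3 : |K (h (x t_k)) - K (h (x t))| ≤ c_κ * (L_x * ΔT) := by
      refine (hκ _ _).trans ?_
      rw [norm_sub_rev]
      exact mul_le_mul_of_nonneg_left hdist hcκ
    have hinner : ⟪b (x t), u⟫ - ⟪b (x t_k), u⟫ = ⟪b (x t) - b (x t_k), u⟫ :=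
      (inner_sub_left _ _ _).symm
    have hη : ΔT * L_x * (c_a + c_b * B_u + c_κ)
        = c_a * (L_x * ΔT) + c_b * (L_x * ΔT) * B_u + c_κ * (L_x * ΔT) := by ring
    rw [abs_le] at h1 h2 h3
    simp only [hφ]
    linarith [h1.1, h2.1, h3.1, hrobust, hinner]
  -- continuity of φ on the interval
  have hcont : ContinuousOn φ (Set.Icc t_k T) := fun t ht =>
    (hderiv t ht).continuousAt.continuousWithinAt
  -- main argument by contradiction
  by_contra hcon
  push_neg at hcon
  obtain ⟨t1, ht1, hneg⟩ := hcon
  set S : Set ℝ := Set.Icc t_k t1 ∩ {t | 0 ≤ φ t} with hS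
  have hsub : Set.Icc t_k t1 ⊆ Set.Icc t_k T :=
    Set.Icc_subset_Icc le_rfl ht1.2
  have hSne : S.Nonempty := ⟨t_k, ⟨le_rfl, ht1.1⟩, hsafe0⟩
  have hSbdd : BddAbove S := ⟨t1, fun t htS => htS.1.2⟩
  have hSclosed : IsClosed S := by
    have : S = Set.Icc t_k t1 ∩ φ ⁻¹' Set.Ici 0 := by
      ext t; simp [hS, Set.mem_preimage]
    rw [this]
    exact (hcont.mono hsub).preimage_isClosed_of_isClosed isClosed_Icc isClosed_Ici
  set t0 := sSup S with ht0def
  have ht0S : t0 ∈ S := hSclosed.csSup_mem hSne hSbdd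
  have ht0le : t0 ≤ t1 := ht0S.1.2
  have ht0lt : t0 < t1 := lt_of_le_of_ne ht0le (by
    intro hEq
    have : 0 ≤ φ t1 := hEq ▸ ht0S.2
    linarith)
  have hbetween : ∀ t ∈ Set.Ioc t0 t1, φ t < 0 := by
    intro t htI
    by_contra hge
    push_neg at hge
    have : t ∈ S := ⟨⟨le_trans ht0S.1.1 htI.1.le, htI.2⟩, hge⟩
    exact absurd (le_csSup hSbdd this) (not_le.2 htI.1)
  set E : ℝ → ℝ := fun t => Real.exp (-(cK : ℝ) * t) with hE
  set w : ℝ → ℝ := fun t => φ t * E t with hw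
  have hIcc01 : Set.Icc t0 t1 ⊆ Set.Icc t_k T :=
    Set.Icc_subset_Icc ht0S.1.1 ht1.2
  have hEderiv : ∀ t : ℝ, HasDerivAt E (E t * (-(cK : ℝ))) t := by
    intro t
    have h1 : HasDerivAt (fun s : ℝ => -(cK : ℝ) * s) (-(cK : ℝ)) t := by
      simpa using (hasDerivAt_id t).const_mul (-(cK : ℝ))
    exact h1.exp
  have hwderiv : ∀ t ∈ Set.Icc t_k T,
      HasDerivAt w ((a (x t) + ⟪b (x t), u⟫) * E t + φ t * (E t * (-(cK : ℝ)))) t := by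
    intro t ht
    exact (hderiv t ht).mul (hEderiv t)
  have hmono : MonotoneOn w (Set.Icc t0 t1) := by
    apply monotoneOn_of_deriv_nonneg (convex_Icc t0 t1)
    · exact ((hcont.mono hIcc01).mul (Real.continuous_exp.comp (by continuity)).continuousOn)
    · intro t htI
      rw [interior_Icc] at htI
      exact (hwderiv t (hIcc01 ⟨htI.1.le, htI.2.le⟩)).differentiableAt.differentiableWithinAt
    · intro t htI
      rw [interior_Icc] at htI
      have htmem : t ∈ Set.Icc t_k T := hIcc01 ⟨htI.1.le, htI.2.le⟩
      rw [(hwderiv t htmem).deriv]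
      have hφneg : φ t < 0 := hbetween t ⟨htI.1, htI.2.le⟩
      have hA : -K (φ t) ≤ a (x t) + ⟪b (x t), u⟫ := key t htmem
      have hKb : K (φ t) ≤ (cK : ℝ) * (-(φ t)) := by
        have := hKabs (φ t)
        rwa [abs_of_neg hφneg] at this
      have hEpos : 0 < E t := Real.exp_pos _
      nlinarith [mul_pos hEpos (show (0:ℝ) < 1 by norm_num)]
  have hle : w t0 ≤ w t1 :=
    hmono ⟨le_rfl, ht0le⟩ ⟨ht0le, le_rfl⟩ ht0le
  have hw0 : 0 ≤ w t0 := mul_nonneg ht0S.2 (Real.exp_pos _).le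
  have hw1 : w t1 < 0 :=
    mul_neg_of_neg_of_pos hneg (Real.exp_pos _)
  linarith
end

section
/- Let (Ω, 𝔽, P) be a probability space and γ ∈ (0,1). Let h : ℝⁿ → ℝ, let K : ℝ → ℝ be Lipschitz with K(0) = 0, let a : ℝⁿ → ℝ be Lipschitz with constant c_a, let b : ℝⁿ → ℝᵐ be Lipschitz with constant c_b, and suppose K ∘ h is Lipschitz with constant c_κ. Fix t_k ∈ ℝ, ΔT > 0, B_u > 0, and set η := ΔT · L_x · (c_a + c_b·B_u + c_κ). For each ω ∈ Ω let u(ω) ∈ ℝᵐ with ‖u(ω)‖ ≤ B_u and let x(·, ω) : ℝ → ℝⁿ be Lipschitz with constant L_x such that for every t ∈ [t_k, t_k + ΔT] the map t ↦ h(x(t, ω)) is differentiable at t with derivative a(x(t,ω)) + ⟨b(x(t,ω)), u(ω)⟩, and h(x(t_k, ω)) ≥ 0. Suppose the events A := {ω : a(x(t_k,ω)) + ⟨b(x(t_k,ω)), u(ω)⟩ + K(h(x(t_k,ω))) ≥ η} and E := {ω : h(x(t,ω)) ≥ 0 for all t ∈ [t_k, t_k+ΔT]} are measurable, and that P(A)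 ≥ 1 − γ. Then P(E) ≥ 1 − γ. -/
open scoped RealInnerProductSpace NNReal
open MeasureTheory

/-- Probabilistic safety guarantee (Lemma 2 of the paper): if for each random
outcome `ω` (encoding the stochastic human action) the analytic hypotheses of
the Robust CBF lemma hold, and the robust CBF condition at `t_k` (event `A`)
holds with probability at least `1 − γ`, then the trajectory stays in the safe
set on `[t_k, t_k + ΔT]` (event `E`) with probability at least `1 − γ`. -/
theorem stmt4 {Ω : Type*} [MeasurableSpace Ω] (P : Measure Ω) [IsProbabilityMeasure P]
    (γ : ℝ) (hγ : γ ∈ Set.Ioo (0 : ℝ) 1)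
    {n m : ℕ}
    (h : EuclideanSpace ℝ (Fin n) → ℝ)
    (K : ℝ → ℝ) (cK : ℝ≥0) (hK : LipschitzWith cK K) (hK0 : K 0 = 0)
    (a : EuclideanSpace ℝ (Fin n) → ℝ)
    (b : EuclideanSpace ℝ (Fin n) → EuclideanSpace ℝ (Fin m))
    (c_a c_b c_κ L_x : ℝ)
    (ha : ∀ p q, |a p - a q| ≤ c_a * ‖p - q‖)
    (hb : ∀ p q, ‖b p - b q‖ ≤ c_b * ‖p - q‖)
    (hκ : ∀ p q, |K (h p) - K (h q)| ≤ c_κ * ‖p - q‖)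
    (t_k ΔT B_u : ℝ) (hΔT : 0 < ΔT) (hBu : 0 < B_u)
    (u : Ω → EuclideanSpace ℝ (Fin m))
    (x : ℝ → Ω → EuclideanSpace ℝ (Fin n))
    (hu : ∀ ω, ‖u ω‖ ≤ B_u)
    (hx : ∀ ω, ∀ s t : ℝ, ‖x s ω - x t ω‖ ≤ L_x * |s - t|)
    (hderiv : ∀ ω, ∀ t ∈ Set.Icc t_k (t_k + ΔT),
      HasDerivAt (fun s => h (x s ω)) (a (x t ω) + ⟪b (x t ω), u ω⟫) t)
    (hsafe0 : ∀ ω, 0 ≤ h (x t_k ω))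
    (A E : Set Ω)
    (hA : A = {ω | a (x t_k ω) + ⟪b (x t_k ω), u ω⟫ + K (h (x t_k ω)) ≥
      ΔT * L_x * (c_a + c_b * B_u + c_κ)})
    (hE : E = {ω | ∀ t ∈ Set.Icc t_k (t_k + ΔT), 0 ≤ h (x t ω)})
    (hAmeas : MeasurableSet A) (hEmeas : MeasurableSet E)
    (hPA : ENNReal.ofReal (1 - γ) ≤ P A) :
    ENNReal.ofReal (1 - γ) ≤ P E := by
  have hsub : A ⊆ E := by
    intro ω hω
    rw [hA] at hω
    rw [hE]
    simp only [Set.mem_setOf_eq] at hω ⊢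
    by_cases hdeg : ∀ p q : EuclideanSpace ℝ (Fin n), p = q
    · intro t ht
      have hxx : x t ω = x t_k ω := hdeg _ _
      rw [hxx]; exact hsafe0 ω
    · push_neg at hdeg
      obtain ⟨p, q, hpq⟩ := hdeg
      have hnorm : (0:ℝ) < ‖p - q‖ := by simpa [sub_eq_zero] using hpq
      have hca : 0 ≤ c_a := by nlinarith [ha p q, abs_nonneg (a p - a q)]
      have hcb : 0 ≤ c_b := by nlinarith [hb p q, norm_nonneg (b p - b q)]
      have hcκ : 0 ≤ c_κ := by nlinarith [hκ p q, abs_nonneg (K (h p) - K (h q))]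
      have hLx : 0 ≤ L_x := by
        have h1 := hx ω (t_k + 1) t_k
        have h2 := norm_nonneg (x (t_k + 1) ω - x t_k ω)
        simp at h1
        linarith
      set φ : ℝ → ℝ := fun s => h (x s ω) with hφdef
      set φ' : ℝ → ℝ := fun s => a (x s ω) + ⟪b (x s ω), u ω⟫ with hφ'def
      -- key derivative bound
      have key : ∀ s ∈ Set.Icc t_k (t_k + ΔT), -((cK : ℝ) * |φ s|) ≤ φ' s := by
        intro s hs
        have hdx : ‖x s ω - x t_k ω‖ ≤ L_x * ΔT := by
          have h0 := hx ω s t_k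
          have habs : |s - t_k| ≤ ΔT := by
            rw [abs_of_nonneg (by linarith [hs.1])]
            linarith [hs.2]
          nlinarith [norm_nonneg (x s ω - x t_k ω)]
        have h1 : |a (x s ω) - a (x t_k ω)| ≤ c_a * (L_x * ΔT) := by
          calc |a (x s ω) - a (x t_k ω)| ≤ c_a * ‖x s ω - x t_k ω‖ := ha _ _
            _ ≤ c_a * (L_x * ΔT) := by nlinarith
        have h2 : |⟪b (x s ω) - b (x t_k ω), u ω⟫| ≤ c_b * (L_x * ΔT) * B_u := by
          have h2a := abs_real_inner_le_norm (b (x s ω) - b (x t_k ω)) (u ω)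
          have h2b := hb (x s ω) (x t_k ω)
          have h2c := hu ω
          have h2d := norm_nonneg (b (x s ω) - b (x t_k ω))
          have h2e := norm_nonneg (u ω)
          have h2f : ‖b (x s ω) - b (x t_k ω)‖ ≤ c_b * (L_x * ΔT) := by nlinarith
          have h2g : ‖b (x s ω) - b (x t_k ω)‖ * ‖u ω‖ ≤ c_b * (L_x * ΔT) * B_u :=
            mul_le_mul h2f h2c h2e (by positivity)
          linarith
        have h3 : |K (φ s) - K (φ t_k)| ≤ c_κ * (L_x * ΔT) := by
          calc |K (φ s) - K (φ t_k)| ≤ c_κ * ‖x s ω - x t_k ω‖ := hκ _ _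
            _ ≤ _ := by nlinarith
        have h4 : |K (φ s)| ≤ (cK : ℝ) * |φ s| := by
          have := hK.dist_le_mul (φ s) 0
          simpa [Real.dist_eq, hK0] using this
        have hinner : ⟪b (x s ω), u ω⟫ - ⟪b (x t_k ω), u ω⟫
            = ⟪b (x s ω) - b (x t_k ω), u ω⟫ := (inner_sub_left _ _ _).symm
        have hη : ΔT * L_x * (c_a + c_b * B_u + c_κ)
            = c_a * (L_x * ΔT) + c_b * (L_x * ΔT) * B_u + c_κ * (L_x * ΔT) := by ring
        have habs1 := abs_le.1 h1
        have habs2 := abs_le.1 h2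
        have habs3 := abs_le.1 h3
        have habs4 := abs_le.1 h4
        simp only [hφ'def]
        linarith [habs1.1, habs2.1, habs3.1, habs4.2, hω, hinner]
      have hφcont : ContinuousOn φ (Set.Icc t_k (t_k + ΔT)) := fun s hs =>
        (hderiv ω s hs).continuousAt.continuousWithinAt
      set f : ℝ → ℝ := fun s => max (-(φ s)) 0 with hfdef
      have hfcont : ContinuousOn f (Set.Icc t_k (t_k + ΔT)) :=
        fun s hs => ((hφcont s hs).neg).max tendsto_const_nhds
      have hslope : ∀ x₀ ∈ Set.Ico t_k (t_k + ΔT), ∀ r, (cK : ℝ) * f x₀ < r →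
          ∃ᶠ z in nhdsWithin x₀ (Set.Ioi x₀), (z - x₀)⁻¹ * (f z - f x₀) < r := by
        intro x₀ hx₀ r hr
        have hx₀' : x₀ ∈ Set.Icc t_k (t_k + ΔT) := Set.Ico_subset_Icc_self hx₀
        have hf0 : (0 : ℝ) ≤ f x₀ := le_max_right _ _
        have hrpos : 0 < r := lt_of_le_of_lt (mul_nonneg cK.coe_nonneg hf0) hr
        have hd := hderiv ω x₀ hx₀'
        by_cases hφpos : 0 < φ x₀
        · have hev : ∀ᶠ z in nhdsWithin x₀ (Set.Ioi x₀), 0 < φ z :=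
            (hd.continuousAt.eventually (lt_mem_nhds hφpos)).filter_mono nhdsWithin_le_nhds
          refine (hev.mono ?_).frequently
          intro z hz
          have hz1 : f z = 0 := max_eq_right (by linarith)
          have hz2 : f x₀ = 0 := max_eq_right (by linarith)
          rw [hz1, hz2]
          simpa using hrpos
        · push_neg at hφpos
          have hfx : f x₀ = -(φ x₀) := max_eq_left (by linarith)
          have hkey := key x₀ hx₀'
          have habs : |φ x₀| = -(φ x₀) := abs_of_nonpos hφpos
          have hdr : -r < φ' x₀ := by
            rw [habs] at hkey; rw [hfx] at hr; linarith
          have htend : Filter.Tendsto (slope φ x₀) (nhdsWithin x₀ (Set.Ioi x₀))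
              (nhds (φ' x₀)) :=
            (hasDerivAt_iff_tendsto_slope.1 hd).mono_left
              (nhdsWithin_mono _ (fun z hz => (ne_of_gt hz : z ≠ x₀)))
          have hev1 : ∀ᶠ z in nhdsWithin x₀ (Set.Ioi x₀), -r < slope φ x₀ z :=
            htend.eventually (lt_mem_nhds hdr)
          have hev2 : ∀ᶠ z in nhdsWithin x₀ (Set.Ioi x₀), z ∈ Set.Ioi x₀ :=
            self_mem_nhdsWithin
          refine ((hev1.and hev2).mono ?_).frequently
          rintro z ⟨h1, h2⟩
          have hzgt : x₀ < z := h2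
          rw [slope_def_field] at h1
          rcases le_or_gt (φ z) 0 with hc | hc
          · have hfz : f z = -(φ z) := max_eq_left (by linarith)
            rw [hfz, hfx, inv_mul_eq_div, div_lt_iff₀ (by linarith)]
            rw [lt_div_iff₀ (by linarith)] at h1
            nlinarith
          · have hfz : f z = 0 := max_eq_right (by linarith)
            rw [hfz, hfx, inv_mul_eq_div, div_lt_iff₀ (by linarith)]
            nlinarith
      have hbound : ∀ s ∈ Set.Ico t_k (t_k + ΔT),
          (cK : ℝ) * f s ≤ (cK : ℝ) * f s + 0 := by
        intro s _; simp
      have hinit : f t_k ≤ (0 : ℝ) := max_le (by linarith [hsafe0 ω]) le_rfl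
      have hgron := le_gronwallBound_of_liminf_deriv_right_le
        (f' := fun s => (cK : ℝ) * f s) hfcont hslope hinit hbound
      intro t ht
      have hft := hgron t ht
      rw [gronwallBound_ε0_δ0] at hft
      have := le_max_left (-(φ t)) 0
      have hφt : -(φ t) ≤ 0 := le_trans this hft
      simpa using hφt
  calc ENNReal.ofReal (1 - γ) ≤ P A := hPA
    _ ≤ P E := measure_mono hsub
end
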